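/- Let R be a commutative ring with char(R) ≠ 2 and let G be a Hamiltonian 2-group with a nontrivial orientation homomorphism σ and kernel N = ker(σ). Then: (1) if N is abelian, the set of antisymmetric elements (RG)⁻ under φ_σ is commutative; (2) if N is not abelian and char(R) = 4, then (RG)⁻ is commutative. -/

import Mathlib

open Subgroup

/-- The oriented involution `φ_σ` on the group ring `R[G]`, determined by an
orientation homomorphism `σ : G → {±1}`:  `φ_σ (∑ r_g g) = ∑ r_g σ(g) g⁻¹`. -/
noncomputable def phiSigma {R : Type*} [CommRing R] {G : Type*} [Group G]
    (σ : G →* ℤˣ) (x : MonoidAlgebra R G) : MonoidAlgebra R G :=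
  Finsupp.sum x.coeff fun g r => MonoidAlgebra.single g⁻¹ ((σ g : ℤ) • r)

/-- The set of antisymmetric elements `(RG)⁻ = {x | φ_σ(x) = -x}` of the group ring is
commutative. -/
def AntisymmCommute (R : Type*) [CommRing R] (G : Type*) [Group G] (σ : G →* ℤˣ) : Prop :=
  ∀ x y : MonoidAlgebra R G, phiSigma σ x = -x → phiSigma σ y = -y → x * y = y * x

/-- The elementary abelian 2-group on the index set `ι`; every elementary abelian 2-group
is of this form. -/
abbrev ElemAb2 (ι : Type) : Type := Multiplicative (ι →₀ ZMod 2)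

/-- A Hamiltonian 2-group: a group of the form `Q₈ × E` with `E` an elementary abelian
2-group. -/
def IsHamiltonian2Group (H : Type*) [Group H] : Prop :=
  ∃ ι : Type, Nonempty (H ≃* (QuaternionGroup 2 × ElemAb2 ι))

section Aux

variable {R : Type*} [CommRing R] {G : Type*} [Group G] (σ : G →* ℤˣ)

lemma units_int_self_inv (u : ℤˣ) : ((u⁻¹ : ℤˣ) : ℤ) = (u : ℤ) := by
  rcases Int.units_eq_one_or u with h | h <;> simp [h]

lemma units_smul_units_smul (u : ℤˣ) (r : R) : (u : ℤ) • (u : ℤ) • r = r := by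
  rcases Int.units_eq_one_or u with h | h <;> simp [h]

lemma phiSigma_single (g : G) (r : R) :
    phiSigma σ (MonoidAlgebra.single g r) = MonoidAlgebra.single g⁻¹ ((σ g : ℤ) • r) := by
  unfold phiSigma
  rw [MonoidAlgebra.coeff_single, Finsupp.sum_single_index]
  simp

lemma phiSigma_sub (x y : MonoidAlgebra R G) :
    phiSigma σ (x - y) = phiSigma σ x - phiSigma σ y := by
  unfold phiSigma
  rw [MonoidAlgebra.coeff_sub]
  apply Finsupp.sum_sub_index
  intro a b₁ b₂
  rw [smul_sub, MonoidAlgebra.single_sub]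

lemma phiSigma_apply (x : MonoidAlgebra R G) (k : G) :
    (phiSigma σ x).coeff k = (σ k : ℤ) • x.coeff k⁻¹ := by
  unfold phiSigma
  rw [MonoidAlgebra.coeff_finsuppSum, Finsupp.sum_apply, Finsupp.sum]
  rw [Finset.sum_eq_single k⁻¹]
  · rw [inv_inv, MonoidAlgebra.coeff_single, Finsupp.single_eq_same, map_inv, units_int_self_inv]
  · intro b _ hb
    rw [MonoidAlgebra.coeff_single, Finsupp.single_apply_eq_zero]
    intro h
    exact absurd (by rw [h, inv_inv]) hb
  · intro h
    rw [Finsupp.notMem_support_iff.mp h, smul_zero, MonoidAlgebra.single_zero, MonoidAlgebra.coeff_zero,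
      Finsupp.coe_zero,
      Pi.zero_apply]

lemma antisymm_coeff {x : MonoidAlgebra R G} (hx : phiSigma σ x = -x) (k : G) :
    x.coeff k⁻¹ = -((σ k : ℤ) • x.coeff k) := by
  have h1 : (σ k : ℤ) • x.coeff k⁻¹ = -(x.coeff k) := by
    rw [← phiSigma_apply σ x k, hx, MonoidAlgebra.coeff_neg]
    exact Finsupp.neg_apply x.coeff k
  calc x.coeff k⁻¹ = (σ k : ℤ) • (σ k : ℤ) • x.coeff k⁻¹ := (units_smul_units_smul _ _).symm
    _ = (σ k : ℤ) • (-(x.coeff k)) := by rw [h1]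
    _ = -((σ k : ℤ) • x.coeff k) := smul_neg _ _

/-- The generating set for the antisymmetric elements. -/
def genSet : Set (MonoidAlgebra R G) :=
  {a | ∃ g : G, ∃ r : R, a = MonoidAlgebra.single g r ∧ (σ g : ℤ) • r = -r ∧ g * g = 1} ∪
  {a | ∃ g : G, ∃ r : R, a = MonoidAlgebra.single g r - MonoidAlgebra.single g⁻¹ ((σ g : ℤ) • r)}

lemma mem_closure_genSet_aux :
    ∀ (n : ℕ) (x : MonoidAlgebra R G), x.coeff.support.card ≤ n → phiSigma σ x = -x →
      x ∈ AddSubgroup.closure (genSet σ (R := R)) := by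
  haveI := Classical.decEq G
  intro n
  induction n with
  | zero =>
    intro x hc _
    have : x = 0 := by
      rwa [Nat.le_zero, Finset.card_eq_zero, Finsupp.support_eq_empty, MonoidAlgebra.coeff_eq_zero] at hc
    rw [this]
    exact zero_mem _
  | succ n ih =>
    intro x hc hx
    by_cases h0 : x = 0
    · rw [h0]; exact zero_mem _
    obtain ⟨g, hg⟩ := Finsupp.support_nonempty_iff.mpr (show x.coeff ≠ 0 by simpa using h0)
    by_cases hgi : g⁻¹ = g
    · set a : MonoidAlgebra R G := MonoidAlgebra.single g (x.coeff g) with ha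
      have hprop : (σ g : ℤ) • (x.coeff g) = -(x.coeff g) := by
        have := antisymm_coeff σ hx g
        rw [hgi] at this
        exact neg_eq_iff_eq_neg.mp this.symm
      have hmem : a ∈ genSet σ (R := R) :=
        Or.inl ⟨g, x.coeff g, rfl, hprop, inv_eq_iff_mul_eq_one.mp hgi⟩
      have haanti : phiSigma σ a = -a := by
        rw [ha, phiSigma_single, hgi, hprop, MonoidAlgebra.single_neg]
      have hxa : x - a = MonoidAlgebra.erase g x := by
        apply MonoidAlgebra.coeff_injective
        rw [MonoidAlgebra.coeff_sub, MonoidAlgebra.coeff_erase, ha, MonoidAlgebra.coeff_single,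
          Finsupp.erase_eq_sub_single]
      have hcard : (x - a).coeff.support.card ≤ n := by
        rw [hxa, MonoidAlgebra.coeff_erase, Finsupp.support_erase]
        have := Finset.card_erase_of_mem hg
        omega
      have hanti2 : phiSigma σ (x - a) = -(x - a) := by
        rw [phiSigma_sub, hx, haanti]; abel
      have := ih (x - a) hcard hanti2
      have := AddSubgroup.add_mem _ this (AddSubgroup.subset_closure hmem)
      simpa using this
    · set a : MonoidAlgebra R G :=
        MonoidAlgebra.single g (x.coeff g) - MonoidAlgebra.single g⁻¹ ((σ g : ℤ) • (x.coeff g)) with ha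
      have hmem : a ∈ genSet σ (R := R) := Or.inr ⟨g, x.coeff g, rfl⟩
      have haanti : phiSigma σ a = -a := by
        rw [ha, phiSigma_sub, phiSigma_single, phiSigma_single, inv_inv, map_inv,
          units_int_self_inv, units_smul_units_smul]
        abel
      have happ : (Finsupp.erase g x.coeff) g⁻¹ = -((σ g : ℤ) • x.coeff g) := by
        rw [Finsupp.erase_ne hgi, antisymm_coeff σ hx g]
      have hxa : x - a = MonoidAlgebra.erase g⁻¹ (MonoidAlgebra.erase g x) := by
        apply MonoidAlgebra.coeff_injective
        rw [MonoidAlgebra.coeff_erase, MonoidAlgebra.coeff_erase]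
        rw [Finsupp.erase_eq_sub_single (Finsupp.erase g x.coeff) g⁻¹, happ, Finsupp.single_neg,
          Finsupp.erase_eq_sub_single x.coeff g, ha, MonoidAlgebra.coeff_sub, MonoidAlgebra.coeff_sub,
          MonoidAlgebra.coeff_single, MonoidAlgebra.coeff_single, sub_neg_eq_add, sub_add]
      have hcard : (x - a).coeff.support.card ≤ n := by
        rw [hxa, MonoidAlgebra.coeff_erase, MonoidAlgebra.coeff_erase, Finsupp.support_erase,
          Finsupp.support_erase]
        have h1 := Finset.card_erase_of_mem hg
        have h2 := Finset.card_erase_le (s := x.coeff.support.erase g) (a := g⁻¹)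
        omega
      have hanti2 : phiSigma σ (x - a) = -(x - a) := by
        rw [phiSigma_sub, hx, haanti]; abel
      have := ih (x - a) hcard hanti2
      have := AddSubgroup.add_mem _ this (AddSubgroup.subset_closure hmem)
      simpa using this

lemma fs_mul (g h : G) (r t : R) :
    HMul.hMul (α := MonoidAlgebra R G) (β := MonoidAlgebra R G) (γ := MonoidAlgebra R G)
      (MonoidAlgebra.single g r) (MonoidAlgebra.single h t) = MonoidAlgebra.single (g * h) (r * t) :=
  MonoidAlgebra.single_mul_single ..

lemma comm_single {g h : G} (hc : g * h = h * g) (r t : R) :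
    Commute (S := MonoidAlgebra R G) (MonoidAlgebra.single g r) (MonoidAlgebra.single h t) := by
  unfold Commute SemiconjBy
  rw [fs_mul, fs_mul, hc, mul_comm t r]

lemma L11 {A B C D X Y : MonoidAlgebra R G}
    (h1 : A*C = X) (h2 : A*D = Y) (h3 : B*C = Y) (h4 : B*D = X)
    (h5 : C*A = Y) (h6 : D*A = X) (h7 : C*B = X) (h8 : D*B = Y)
    (h9 : X + X + X + X = 0) (h10 : Y + Y + Y + Y = 0) :
    (A - B) * (C - D) = (C - D) * (A - B) := by
  simp only [sub_mul, mul_sub]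
  rw [h1, h2, h3, h4, h5, h6, h7, h8, ← sub_eq_zero]
  have h : X - Y - (Y - X) - (Y - X - (X - Y)) = X + X + X + X - (Y + Y + Y + Y) := by abel
  rw [h, h9, h10, sub_zero]

lemma L12 {A B C D X Y : MonoidAlgebra R G}
    (h1 : A*C = X) (h2 : A*D = Y) (h3 : B*C = Y) (h4 : B*D = X)
    (h5 : C*A = Y) (h6 : D*A = X) (h7 : C*B = X) (h8 : D*B = Y) :
    (A - B) * (C + D) = (C + D) * (A - B) := by
  simp only [sub_mul, mul_sub, add_mul, mul_add]
  rw [h1, h2, h3, h4, h5, h6, h7, h8]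
  abel

lemma L21 {A B C D X Y : MonoidAlgebra R G}
    (h1 : A*C = X) (h2 : A*D = Y) (h3 : B*C = Y) (h4 : B*D = X)
    (h5 : C*A = Y) (h6 : D*A = X) (h7 : C*B = X) (h8 : D*B = Y) :
    (A + B) * (C - D) = (C - D) * (A + B) := by
  simp only [sub_mul, mul_sub, add_mul, mul_add]
  rw [h1, h2, h3, h4, h5, h6, h7, h8]
  abel

lemma L22 {A B C D X Y : MonoidAlgebra R G}
    (h1 : A*C = X) (h2 : A*D = Y) (h3 : B*C = Y) (h4 : B*D = X)
    (h5 : C*A = Y) (h6 : D*A = X) (h7 : C*B = X) (h8 : D*B = Y) :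
    (A + B) * (C + D) = (C + D) * (A + B) := by
  simp only [add_mul, mul_add]
  rw [h1, h2, h3, h4, h5, h6, h7, h8]
  abel

lemma antisymmCommute_of (s : G) (hcen : ∀ w : G, s * w = w * s) (hss : s * s = 1)
    (H3 : ∀ g h : G, g * h = h * g ∨ (h * g = s * (g * h) ∧ g * g = s ∧ h * h = s))
    (hkey : ∀ g h : G, ¬g * h = h * g → σ g = 1 → σ h = 1 → ∀ c : R, c + c + c + c = 0) :
    AntisymmCommute R G σ := by
  have comm_of_sq_one : ∀ g h : G, g * g = 1 → g * h = h * g := by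
    intro g h hgg
    rcases H3 g h with hc | ⟨hmul, hg2, _⟩
    · exact hc
    · have hs1 : s = 1 := by rw [← hg2, hgg]
      rw [hs1, one_mul] at hmul
      exact hmul.symm
  have hgen : ∀ a ∈ genSet σ (R := R), ∀ b ∈ genSet σ (R := R), a * b = b * a := by
    rintro a (⟨g, r, ha, hgr, hgg⟩ | ⟨g, r, ha⟩) b (⟨h, t, hb, hht, hhh⟩ | ⟨h, t, hb⟩) <;>
      rw [ha, hb]
    · exact (comm_single (comm_of_sq_one g h hgg) r t).eq
    · have hC : Commute g h := comm_of_sq_one g h hgg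
      exact ((comm_single hC.eq r t).sub_right (comm_single hC.inv_right.eq r _)).eq
    · have hC : Commute g h := (comm_of_sq_one h g hhh).symm
      exact ((comm_single hC.eq r t).sub_left (comm_single hC.inv_left.eq _ t)).eq
    · by_cases hc : g * h = h * g
      · have hC : Commute g h := hc
        exact (((comm_single hC.eq r t).sub_left (comm_single hC.inv_left.eq _ t)).sub_right
          ((comm_single hC.inv_right.eq r _).sub_left
            (comm_single (hC.inv_left.inv_right).eq _ _))).eq
      rcases H3 g h with hc' | ⟨hmul, hg2, hh2⟩
      · exact absurd hc' hc
      have hginv : g⁻¹ = s * g := by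
        refine inv_eq_of_mul_eq_one_right ?_
        rw [← mul_assoc, ← hcen g, mul_assoc, hg2, hss]
      have hhinv : h⁻¹ = s * h := by
        refine inv_eq_of_mul_eq_one_right ?_
        rw [← mul_assoc, ← hcen h, mul_assoc, hh2, hss]
      have e1 : g * h⁻¹ = s * (g * h) := by rw [hhinv, ← mul_assoc, ← hcen g, mul_assoc]
      have e2 : g⁻¹ * h = s * (g * h) := by rw [hginv, mul_assoc]
      have e3 : g⁻¹ * h⁻¹ = g * h := by
        rw [hginv, hhinv, mul_assoc, ← hhinv, e1, ← mul_assoc, hss, one_mul]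
      have e4 : h * g = s * (g * h) := hmul
      have e5 : h * g⁻¹ = g * h := by
        rw [hginv, ← mul_assoc, ← hcen h, mul_assoc, hmul, ← mul_assoc, hss, one_mul]
      have e6 : h⁻¹ * g = g * h := by
        rw [hhinv, mul_assoc, hmul, ← mul_assoc, hss, one_mul]
      have e7 : h⁻¹ * g⁻¹ = s * (g * h) := by rw [hhinv, mul_assoc, e5]
      rcases Int.units_eq_one_or (σ g) with hg1 | hg1 <;>
        rcases Int.units_eq_one_or (σ h) with hh1 | hh1 <;>
          simp only [hg1, hh1, Units.val_one, Units.val_neg, one_smul, neg_smul,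
            MonoidAlgebra.single_neg, sub_neg_eq_add]
      · have h4 := hkey g h hc hg1 hh1
        refine L11 (X := MonoidAlgebra.single (g * h) (r * t))
          (Y := MonoidAlgebra.single (s * (g * h)) (r * t)) ?_ ?_ ?_ ?_ ?_ ?_ ?_ ?_ ?_ ?_
        · rw [fs_mul]
        · rw [fs_mul, e1]
        · rw [fs_mul, e2]
        · rw [fs_mul, e3]
        · rw [fs_mul, e4, mul_comm t r]
        · rw [fs_mul, e6, mul_comm t r]
        · rw [fs_mul, e5, mul_comm t r]
        · rw [fs_mul, e7, mul_comm t r]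
        · rw [← MonoidAlgebra.single_add, ← MonoidAlgebra.single_add, ← MonoidAlgebra.single_add, h4 (r * t),
            MonoidAlgebra.single_zero]
        · rw [← MonoidAlgebra.single_add, ← MonoidAlgebra.single_add, ← MonoidAlgebra.single_add, h4 (r * t),
            MonoidAlgebra.single_zero]
      · refine L12 (X := MonoidAlgebra.single (g * h) (r * t))
          (Y := MonoidAlgebra.single (s * (g * h)) (r * t)) ?_ ?_ ?_ ?_ ?_ ?_ ?_ ?_
        · rw [fs_mul]
        · rw [fs_mul, e1]
        · rw [fs_mul, e2]
        · rw [fs_mul, e3]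
        · rw [fs_mul, e4, mul_comm t r]
        · rw [fs_mul, e6, mul_comm t r]
        · rw [fs_mul, e5, mul_comm t r]
        · rw [fs_mul, e7, mul_comm t r]
      · refine L21 (X := MonoidAlgebra.single (g * h) (r * t))
          (Y := MonoidAlgebra.single (s * (g * h)) (r * t)) ?_ ?_ ?_ ?_ ?_ ?_ ?_ ?_
        · rw [fs_mul]
        · rw [fs_mul, e1]
        · rw [fs_mul, e2]
        · rw [fs_mul, e3]
        · rw [fs_mul, e4, mul_comm t r]
        · rw [fs_mul, e6, mul_comm t r]
        · rw [fs_mul, e5, mul_comm t r]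
        · rw [fs_mul, e7, mul_comm t r]
      · refine L22 (X := MonoidAlgebra.single (g * h) (r * t))
          (Y := MonoidAlgebra.single (s * (g * h)) (r * t)) ?_ ?_ ?_ ?_ ?_ ?_ ?_ ?_
        · rw [fs_mul]
        · rw [fs_mul, e1]
        · rw [fs_mul, e2]
        · rw [fs_mul, e3]
        · rw [fs_mul, e4, mul_comm t r]
        · rw [fs_mul, e6, mul_comm t r]
        · rw [fs_mul, e5, mul_comm t r]
        · rw [fs_mul, e7, mul_comm t r]
  have step1 : ∀ b ∈ genSet σ (R := R), ∀ x : MonoidAlgebra R G,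
      x ∈ AddSubgroup.closure (genSet σ (R := R)) → x * b = b * x := by
    intro b hb x hx
    refine AddSubgroup.closure_induction (fun a ha => hgen a ha b hb) (by simp) ?_ ?_ hx
    · intro u v _ _ hu hv; rw [add_mul, mul_add, hu, hv]
    · intro u _ hu; rw [neg_mul, mul_neg, hu]
  have step2 : ∀ x ∈ AddSubgroup.closure (genSet σ (R := R)),
      ∀ y ∈ AddSubgroup.closure (genSet σ (R := R)), x * y = y * x := by
    intro x hx y hy
    refine AddSubgroup.closure_induction (fun b hb => step1 b hb x hx) (by simp) ?_ ?_ hy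
    · intro u v _ _ hu hv; rw [mul_add, add_mul, hu, hv]
    · intro u _ hu; rw [mul_neg, neg_mul, hu]
  intro x y hx hy
  exact step2 x (mem_closure_genSet_aux σ x.coeff.support.card x le_rfl hx) y
    (mem_closure_genSet_aux σ y.coeff.support.card y le_rfl hy)

end Aux

/-- For a Hamiltonian 2-group `G` with nontrivial orientation `σ` and kernel `N = ker σ`:
(1) if `N` is abelian then `(RG)⁻` is commutative; (2) if `N` is not abelian and
`char R = 4` then `(RG)⁻` is commutative. -/
theorem antisymm_commute_of_hamiltonian
    {R : Type*} [CommRing R] {G : Type*} [Group G]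
    (hR : ringChar R ≠ 2) (hG : IsHamiltonian2Group G)
    (σ : G →* ℤˣ) (hσ : σ.ker ≠ ⊤) :
    ((∀ x ∈ σ.ker, ∀ y ∈ σ.ker, x * y = y * x) → AntisymmCommute R G σ) ∧
    ((¬ ∀ x ∈ σ.ker, ∀ y ∈ σ.ker, x * y = y * x) → ringChar R = 4 →
      AntisymmCommute R G σ) := by
  obtain ⟨ι, ⟨e⟩⟩ := hG
  set s : G := e.symm (QuaternionGroup.a 2, 1) with hs
  have hes : e s = (QuaternionGroup.a 2, 1) := e.apply_symm_apply _
  have q8fact : ∀ q₁ q₂ : QuaternionGroup 2, q₁ * q₂ = q₂ * q₁ ∨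
      (q₂ * q₁ = QuaternionGroup.a 2 * (q₁ * q₂) ∧ q₁ * q₁ = QuaternionGroup.a 2 ∧
        q₂ * q₂ = QuaternionGroup.a 2) := by decide
  have q8cen : ∀ q : QuaternionGroup 2, QuaternionGroup.a 2 * q = q * QuaternionGroup.a 2 := by
    decide
  have hsq2 : ∀ x : ElemAb2 ι, x * x = 1 := by
    intro x
    apply Multiplicative.toAdd.injective
    ext i
    simp [CharTwo.add_self_eq_zero]
  have hcen : ∀ w : G, s * w = w * s := by
    intro w
    apply e.injective
    rw [map_mul, map_mul, hes]
    refine Prod.ext ?_ ?_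
    · exact q8cen (e w).1
    · simp [mul_comm]
  have haa : (QuaternionGroup.a 2 : QuaternionGroup 2) * QuaternionGroup.a 2 = 1 := by decide
  have hss : s * s = 1 := by
    apply e.injective
    rw [map_mul, hes, map_one]
    refine Prod.ext ?_ ?_
    · simp [haa]
    · simp
  have H3 : ∀ g h : G, g * h = h * g ∨ (h * g = s * (g * h) ∧ g * g = s ∧ h * h = s) := by
    intro g h
    rcases q8fact (e g).1 (e h).1 with hc | ⟨h1, h2, h3⟩
    · left
      apply e.injective
      rw [map_mul, map_mul]
      exact Prod.ext hc (mul_comm _ _)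
    · right
      refine ⟨?_, ?_, ?_⟩
      · apply e.injective
        rw [map_mul, map_mul, map_mul, hes]
        refine Prod.ext ?_ ?_
        · simpa using h1
        · simp [mul_comm]
      · apply e.injective
        rw [map_mul, hes]
        exact Prod.ext h2 (hsq2 _)
      · apply e.injective
        rw [map_mul, hes]
        exact Prod.ext h3 (hsq2 _)
  constructor
  · intro hab
    refine antisymmCommute_of σ s hcen hss H3 ?_
    intro g h hgh hg1 hh1 c
    exact absurd (hab g (MonoidHom.mem_ker.mpr hg1) h (MonoidHom.mem_ker.mpr hh1)) hgh
  · intro _ hchar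
    refine antisymmCommute_of σ s hcen hss H3 ?_
    intro g h _ _ _ c
    have h4 : ((4 : ℕ) : R) = 0 := by
      rw [← hchar, ringChar.Nat.cast_ringChar]
    have : c + c + c + c = ((4 : ℕ) : R) * c := by push_cast; ring
    rw [this, h4, zero_mul]
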